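/- The class of quasi-Gorenstein projective R-modules is projectively resolving: it contains all projective modules, and for any short exact sequence 0 → A → B → C → 0 with C quasi-Gorenstein projective, A is quasi-Gorenstein projective if and only if B is quasi-Gorenstein projective. -/

import Mathlib

open CategoryTheory

universe u
variable {R : Type u} [Ring R]

/-- A module `Q` is quasi-projective if every homomorphism from `Q` to a quotient
of `Q` lifts to an endomorphism of `Q`. -/
def QuasiProjective (Q : ModuleCat.{u} R) : Prop :=
  ∀ (B : ModuleCat.{u} R) (g : Q ⟶ B), Function.Surjective g →
    ∀ f : Q ⟶ B, ∃ h : Q ⟶ Q, h ≫ g = f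

/-- `M` is quasi-Gorenstein projective if it is a syzygy of an exact complex of
projective modules (given by short exact sequences `0 → K (n+1) → P n → K n → 0`)
that remains exact under `Hom(-, Q)` for every quasi-projective module `Q`. -/
def QuasiGorensteinProjective (M : ModuleCat.{u} R) : Prop :=
  ∃ (K P : ℤ → ModuleCat.{u} R) (ι : ∀ n, K (n + 1) ⟶ P n) (π : ∀ n, P n ⟶ K n),
    (∀ n, Module.Projective R (P n)) ∧
    (∀ n, Function.Injective (ι n)) ∧
    (∀ n, Function.Surjective (π n)) ∧
    (∀ n, Function.Exact (ι n) (π n)) ∧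
    (∀ n (Q : ModuleCat.{u} R), QuasiProjective Q →
      ∀ f : K (n + 1) ⟶ Q, ∃ g : P n ⟶ Q, ι n ≫ g = f) ∧
    Nonempty (M ≅ K 0)

namespace QGPaux

variable {R : Type u} [Ring R]

instance instCoeHomLin {X Y : ModuleCat.{u} R} : Coe (X ⟶ Y) (X →ₗ[R] Y) := ⟨fun f => f.hom⟩

instance instCoeLinHom {X Y : ModuleCat.{u} R} : Coe (X →ₗ[R] Y) (X ⟶ Y) := ⟨fun f => ModuleCat.ofHom f⟩

lemma bij_of_iso {X Y : ModuleCat.{u} R} (e : X ≅ Y) : Function.Bijective e.hom := by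
  constructor
  · intro a b hab
    have h2 : e.inv (e.hom a) = e.inv (e.hom b) := congrArg _ hab
    change (e.hom ≫ e.inv) a = (e.hom ≫ e.inv) b at h2
    rwa [e.hom_inv_id] at h2
  · intro y
    refine ⟨e.inv y, ?_⟩
    change (e.inv ≫ e.hom) y = y
    rw [e.inv_hom_id]
    rfl

lemma quasiProjective_of_projective {Q : ModuleCat.{u} R} (h : Module.Projective R Q) :
    QuasiProjective Q := by
  intro B g hg f
  haveI := h
  obtain ⟨l, hl⟩ := Module.projective_lifting_property (g : Q →ₗ[R] B) (f : Q →ₗ[R] B) hg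
  exact ⟨l, ModuleCat.hom_ext hl⟩

lemma descend_exists {M N Q : ModuleCat.{u} R} (u : M ⟶ N) (hu : Function.Surjective u)
    (v : M ⟶ Q) (h : ∀ x, u x = 0 → v x = 0) :
    ∃ w : N ⟶ Q, ∀ x, w (u x) = v x := by
  have hle : LinearMap.ker u.hom ≤ LinearMap.ker (v : M →ₗ[R] Q) := by
    intro x hx
    exact LinearMap.mem_ker.mpr (h x (LinearMap.mem_ker.mp hx))
  let ubar := (LinearMap.ker u.hom).liftQ (u : M →ₗ[R] N) le_rfl
  have hinj : Function.Injective ubar := by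
    rw [← LinearMap.ker_eq_bot]
    exact Submodule.ker_liftQ_eq_bot _ _ _ le_rfl
  have hsurj : Function.Surjective ubar := by
    intro n
    obtain ⟨x, hx⟩ := hu n
    exact ⟨Submodule.Quotient.mk x, by simpa [ubar] using hx⟩
  let e := LinearEquiv.ofBijective ubar ⟨hinj, hsurj⟩
  refine ⟨((LinearMap.ker u.hom).liftQ (v : M →ₗ[R] Q) hle).comp (e.symm : N →ₗ[R] _), fun x => ?_⟩
  have h1 : e (Submodule.Quotient.mk x) = u x := by
    rfl
  have h2 : e.symm (u x) = Submodule.Quotient.mk x := by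
    rw [← h1, LinearEquiv.symm_apply_apply]
  show ((LinearMap.ker u.hom).liftQ (v : M →ₗ[R] Q) hle) (e.symm (u x)) = v x
  rw [h2, Submodule.liftQ_apply]

/-- A short exact sequence `0 → A → B → C → 0`. -/
structure SES (A B C : ModuleCat.{u} R) where
  f : A ⟶ B
  g : B ⟶ C
  inj : Function.Injective f
  surj : Function.Surjective g
  exact : Function.Exact f g

/-- One step of a complete resolution: a short exact sequence `0 → K' → P → K → 0`
with `P` projective, such that every map `K' → Q` to a quasi-projective `Q`
extends to `P`. -/
structure Patch (K' K : ModuleCat.{u} R) where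
  P : ModuleCat.{u} R
  ι : K' ⟶ P
  π : P ⟶ K
  proj : Module.Projective R P
  inj : Function.Injective ι
  surj : Function.Surjective π
  exact : Function.Exact ι π
  lift : ∀ Q : ModuleCat.{u} R, QuasiProjective Q → ∀ f : K' ⟶ Q, ∃ g : P ⟶ Q, ι ≫ g = f

lemma SES.g_f_zero {A B C : ModuleCat.{u} R} (s : SES A B C) (x : A) : s.g (s.f x) = 0 :=
  s.exact.apply_apply_eq_zero x

lemma SES.mem_range_of_g_zero {A B C : ModuleCat.{u} R} (s : SES A B C) {y : B}
    (h : s.g y = 0) : ∃ x, s.f x = y := (s.exact y).mp h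

lemma Patch.pi_iota_zero {K' K : ModuleCat.{u} R} (p : Patch K' K) (x : K') :
    p.π (p.ι x) = 0 := p.exact.apply_apply_eq_zero x

lemma Patch.mem_range_of_pi_zero {K' K : ModuleCat.{u} R} (p : Patch K' K) {y : p.P}
    (h : p.π y = 0) : ∃ x, p.ι x = y := (p.exact y).mp h

/-- Transport a patch along equalities of objects. -/
def Patch.cast {K' K K'' K₂ : ModuleCat.{u} R} (h1 : K' = K'') (h2 : K = K₂)
    (p : Patch K' K) : Patch K'' K₂ := h1 ▸ h2 ▸ p

/-- Transport an SES along isomorphisms of the two end terms. -/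
noncomputable def SES.congr {A B C A' C' : ModuleCat.{u} R} (s : SES A B C)
    (eA : A' ≅ A) (eC : C ≅ C') : SES A' B C' where
  f := eA.hom ≫ s.f
  g := s.g ≫ eC.hom
  inj := s.inj.comp (bij_of_iso eA).injective
  surj := ((bij_of_iso eC).surjective).comp s.surj
  exact := by
    intro y
    constructor
    · intro hy
      have hz : s.g y = 0 := (bij_of_iso eC).injective (by rw [map_zero]; exact hy)
      obtain ⟨x, hx⟩ := s.mem_range_of_g_zero hz
      refine ⟨eA.inv x, ?_⟩
      show s.f (eA.hom (eA.inv x)) = y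
      have h3 : eA.hom (eA.inv x) = x := by
        change (eA.inv ≫ eA.hom) x = x
        rw [eA.inv_hom_id]; rfl
      rw [h3, hx]
    · rintro ⟨x, rfl⟩
      show eC.hom (s.g (s.f (eA.hom x))) = 0
      rw [s.g_f_zero, map_zero]

/-- Transport an SES along an isomorphism of the middle term. -/
noncomputable def SES.congrMid {A B C B' : ModuleCat.{u} R} (s : SES A B C)
    (e : B ≅ B') : SES A B' C where
  f := s.f ≫ e.hom
  g := e.inv ≫ s.g
  inj := (bij_of_iso e).injective.comp s.inj
  surj := s.surj.comp (bij_of_iso e.symm).surjective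
  exact := by
    intro y
    constructor
    · intro hy
      obtain ⟨x, hx⟩ := s.mem_range_of_g_zero hy
      refine ⟨x, ?_⟩
      show e.hom (s.f x) = y
      rw [hx]
      change (e.inv ≫ e.hom) y = y
      rw [e.inv_hom_id]; rfl
    · rintro ⟨x, rfl⟩
      show s.g (e.inv (e.hom (s.f x))) = 0
      have h3 : e.inv (e.hom (s.f x)) = s.f x := by
        change (e.hom ≫ e.inv) (s.f x) = s.f x
        rw [e.hom_inv_id]; rfl
      rw [h3, s.g_f_zero]

/-- If `0 → A → B → C → 0` is exact and `C` admits a patch (one step of a complete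
resolution), then every map from `A` to a quasi-projective module extends to `B`.
This is "Ext¹(C, Q) = 0". -/
lemma extend_of_patch {A B C X : ModuleCat.{u} R} (s : SES A B C) (o : Patch X C)
    (Q : ModuleCat.{u} R) (hQ : QuasiProjective Q) (u : A ⟶ Q) :
    ∃ F : B ⟶ Q, ∀ x, F (s.f x) = u x := by
  haveI := o.proj
  obtain ⟨φ, hφ⟩ :=
    Module.projective_lifting_property (s.g : B →ₗ[R] C) (o.π : o.P →ₗ[R] C) s.surj
  have hφ' : ∀ p, s.g (φ p) = o.π p := fun p => LinearMap.congr_fun hφ p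
  have hmem : ∀ k : X, φ (o.ι k) ∈ LinearMap.range (s.f : A →ₗ[R] B) := by
    intro k
    have h1 : s.g (φ (o.ι k)) = 0 := by rw [hφ', o.pi_iota_zero]
    obtain ⟨x, hx⟩ := s.mem_range_of_g_zero h1
    exact ⟨x, hx⟩
  let eA := LinearEquiv.ofInjective (s.f : A →ₗ[R] B) s.inj
  let ψ : X →ₗ[R] A := (eA.symm : _ →ₗ[R] A) ∘ₗ
    LinearMap.codRestrict (LinearMap.range (s.f : A →ₗ[R] B))
      ((φ : o.P →ₗ[R] B) ∘ₗ (o.ι : X →ₗ[R] o.P)) hmem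
  have hψ : ∀ k, s.f (ψ k) = φ (o.ι k) := by
    intro k
    have h0 : s.f (ψ k) = (eA (ψ k) : B) := (LinearEquiv.ofInjective_apply _ _).symm
    have h1 : (eA (ψ k) : B) = φ (o.ι k) := by
      show ((eA (eA.symm _)) : B) = _
      rw [LinearEquiv.apply_symm_apply]
      exact LinearMap.codRestrict_apply _ _ _
    rw [h0, h1]
  obtain ⟨gP, hgP⟩ := o.lift Q hQ (((u : A →ₗ[R] Q) ∘ₗ ψ : X →ₗ[R] Q) : X ⟶ Q)
  have hgP' : ∀ k, gP (o.ι k) = u (ψ k) := fun k => ConcreteCategory.congr_hom hgP k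
  let M := ModuleCat.of R (Prod (o.P : Type u) (A : Type u))
  let sp : M ⟶ B := ModuleCat.ofHom (LinearMap.coprod (φ : o.P →ₗ[R] B) (s.f : A →ₗ[R] B) : _ →ₗ[R] B)
  have hsp : ∀ p x, sp (p, x) = φ p + s.f x := fun p x => rfl
  have hsurj : Function.Surjective sp := by
    intro y
    obtain ⟨p, hp⟩ := o.surj (s.g y)
    have h1 : s.g (y - φ p) = 0 := by rw [map_sub, hφ', hp, sub_self]
    obtain ⟨x, hx⟩ := s.mem_range_of_g_zero h1
    exact ⟨(p, x), by rw [hsp, hx]; abel⟩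
  let t : M ⟶ Q := ModuleCat.ofHom (LinearMap.coprod (gP : o.P →ₗ[R] Q) (u : A →ₗ[R] Q) : _ →ₗ[R] Q)
  have hkill : ∀ z, sp z = 0 → t z = 0 := by
    rintro ⟨p, x⟩ hz
    rw [hsp] at hz
    have h1 : o.π p = 0 := by
      have h2 := congrArg s.g hz
      rw [map_add, hφ', s.g_f_zero, add_zero, map_zero] at h2
      exact h2
    obtain ⟨k, hk⟩ := o.mem_range_of_pi_zero h1
    have h2 : s.f x = -φ p := by rwa [add_comm, add_eq_zero_iff_eq_neg] at hz
    have h3 : x = -ψ k := by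
      apply s.inj
      rw [h2, ← hk, ← hψ, map_neg]
    show gP p + u x = 0
    rw [← hk, hgP', h3, map_neg, add_neg_cancel]
  obtain ⟨F, hF⟩ := descend_exists sp hsurj t hkill
  refine ⟨F, fun x => ?_⟩
  have h1 := hF (0, x)
  rw [hsp, map_zero, zero_add] at h1
  rw [h1]
  show gP 0 + u x = u x
  rw [map_zero, zero_add]

/-- Horseshoe step, syzygy direction: given `0 → A' → B' → C' → 0` and patches
onto `A'` and `C'`, produce a patch onto `B'` whose kernel `B''` sits in
`0 → A'' → B'' → C'' → 0`. -/
lemma stepPos {A' B' C' A'' C'' : ModuleCat.{u} R} (s : SES A' B' C')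
    (pA : Patch A'' A') (pC : Patch C'' C') :
    ∃ B'' : ModuleCat.{u} R, Nonempty (SES A'' B'' C'' × Patch B'' B') := by
  haveI := pA.proj; haveI := pC.proj
  obtain ⟨φ, hφ⟩ :=
    Module.projective_lifting_property (s.g : B' →ₗ[R] C') (pC.π : pC.P →ₗ[R] C') s.surj
  have hφ' : ∀ p, s.g (φ p) = pC.π p := fun p => LinearMap.congr_fun hφ p
  let PB := ModuleCat.of R (Prod (pA.P : Type u) (pC.P : Type u))
  let πB : PB ⟶ B' :=
    (LinearMap.coprod ((s.f : A' →ₗ[R] B') ∘ₗ (pA.π : pA.P →ₗ[R] A')) φ : _ →ₗ[R] B')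
  have hπB : ∀ z : Prod (pA.P : Type u) (pC.P : Type u),
      πB z = s.f (pA.π z.1) + φ z.2 := fun _ => rfl
  have hπBsurj : Function.Surjective πB := by
    intro y
    obtain ⟨q, hq⟩ := pC.surj (s.g y)
    have h1 : s.g (y - φ q) = 0 := by rw [map_sub, hφ', hq, sub_self]
    obtain ⟨x, hx⟩ := s.mem_range_of_g_zero h1
    obtain ⟨p, hp⟩ := pA.surj x
    refine ⟨(p, q), ?_⟩
    rw [hπB]; dsimp only
    rw [hp, hx]; abel
  let Ker := LinearMap.ker (πB.hom : PB →ₗ[R] B')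
  let B'' := ModuleCat.of R Ker
  let ιB : B'' ⟶ PB := ModuleCat.ofHom Ker.subtype
  have hKer : ∀ z : Prod (pA.P : Type u) (pC.P : Type u),
      z ∈ Ker ↔ s.f (pA.π z.1) + φ z.2 = 0 := fun z => Iff.rfl
  have hmemA : ∀ x : A'', ((pA.ι x, 0) : Prod (pA.P : Type u) (pC.P : Type u)) ∈ Ker := by
    intro x
    rw [hKer]; dsimp only
    rw [pA.pi_iota_zero, map_zero, map_zero, add_zero]
  let a'' : A'' ⟶ B'' := ModuleCat.ofHom <| LinearMap.codRestrict Ker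
    (LinearMap.prod (pA.ι : A'' →ₗ[R] pA.P) (0 : A'' →ₗ[R] pC.P)) hmemA
  have ha'' : ∀ x : A'', ιB (a'' x)
      = (pA.ι x, 0) := fun x => rfl
  have hmemC : ∀ z : Ker, (ιB z).2 ∈
      LinearMap.range (pC.ι : C'' →ₗ[R] pC.P) := by
    intro z
    have h0 : s.f (pA.π (ιB z).1)
        + φ (ιB z).2 = 0 := (hKer _).mp z.2
    have h1 : pC.π (ιB z).2 = 0 := by
      have h2 := congrArg s.g h0
      rw [map_add, s.g_f_zero, hφ', zero_add, map_zero] at h2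
      exact h2
    obtain ⟨c, hc⟩ := pC.mem_range_of_pi_zero h1
    exact ⟨c, hc⟩
  let eC := LinearEquiv.ofInjective (pC.ι : C'' →ₗ[R] pC.P) pC.inj
  let b'' : B'' ⟶ C'' := ModuleCat.ofHom <| (eC.symm : _ →ₗ[R] C'') ∘ₗ
    LinearMap.codRestrict (LinearMap.range (pC.ι : C'' →ₗ[R] pC.P))
      ((LinearMap.snd R (pA.P : Type u) (pC.P : Type u)) ∘ₗ Ker.subtype) hmemC
  have hb'' : ∀ z : Ker, pC.ι (b'' z)
      = (ιB z).2 := by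
    intro z
    have h0 : pC.ι (b'' z) = (eC (b'' z) : pC.P) := (LinearEquiv.ofInjective_apply _ _).symm
    have h1 : (eC (b'' z) : pC.P) = (ιB z).2 := by
      show ((eC (eC.symm _)) : pC.P) = _
      rw [LinearEquiv.apply_symm_apply]
      exact LinearMap.codRestrict_apply _ _ _
    rw [h0, h1]
  -- the SES `0 → A'' → B'' → C'' → 0`
  have hainj : Function.Injective a'' := by
    intro x y hxy
    apply pA.inj
    have := congrArg (fun z : Ker => (ιB z).1) hxy
    simpa [ha''] using this
  have hbsurj : Function.Surjective b'' := by
    intro c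
    have h1 : s.g (-φ (pC.ι c)) = 0 := by
      rw [map_neg, hφ', pC.pi_iota_zero, neg_zero]
    obtain ⟨x, hx⟩ := s.mem_range_of_g_zero h1
    obtain ⟨p, hp⟩ := pA.surj x
    have hmem : ((p, pC.ι c) : Prod (pA.P : Type u) (pC.P : Type u)) ∈ Ker := by
      rw [hKer]; dsimp only
      rw [hp, hx]; abel
    refine ⟨⟨(p, pC.ι c), hmem⟩, ?_⟩
    apply pC.inj
    exact hb'' _
  have hexact : Function.Exact a'' b'' := by
    rintro ⟨⟨p, q⟩, hmem⟩
    constructor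
    · intro hz
      have h3 : pC.ι (b'' ⟨(p, q), hmem⟩) = q := hb'' _
      rw [hz, map_zero] at h3
      have h0 : s.f (pA.π p) + φ q = 0 := (hKer _).mp hmem
      rw [← h3, map_zero, add_zero] at h0
      have h4 : pA.π p = 0 := s.inj (by rw [h0, map_zero])
      obtain ⟨x, hx⟩ := pA.mem_range_of_pi_zero h4
      refine ⟨x, Subtype.ext ?_⟩
      show ((pA.ι x, (0 : ↑pC.P)) : Prod (pA.P : Type u) (pC.P : Type u)) = (p, q)
      rw [hx, h3]
    · rintro ⟨x, hx⟩
      rw [← hx]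
      apply pC.inj
      rw [map_zero]
      exact hb'' (a'' x)
  -- the patch onto B'
  have hlift : ∀ Q : ModuleCat.{u} R, QuasiProjective Q →
      ∀ f : B'' ⟶ Q, ∃ g : PB ⟶ Q, ιB ≫ g = f := by
    intro Q hQ f
    obtain ⟨gA, hgA⟩ := pA.lift Q hQ (ModuleCat.ofHom ((f.hom : B'' →ₗ[R] Q) ∘ₗ (a''.hom : A'' →ₗ[R] B'')) : A'' ⟶ Q)
    have hgA' : ∀ x, gA (pA.ι x) = f (a'' x) := fun x => ConcreteCategory.congr_hom hgA x
    let fl : ↥Ker →ₗ[R] (Q : Type u) := f.hom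
    let f' : ↥Ker →ₗ[R] (Q : Type u) := fl -
      ((gA : (pA.P : Type u) →ₗ[R] (Q : Type u)) ∘ₗ
        (LinearMap.fst R (pA.P : Type u) (pC.P : Type u)) ∘ₗ Ker.subtype)
    have hf' : ∀ z : Ker, f' z = f z - gA (ιB z).1 := fun _ => rfl
    have hkill : ∀ z, b'' z = 0 → f' z = 0 := by
      intro z hz
      obtain ⟨x, hx⟩ := (hexact z).mp hz
      rw [← hx]
      have h5 : f' (a'' x) = f (a'' x) - gA (ιB (a'' x)).1 := hf' _
      have h6 : gA (ιB (a'' x)).1 = f (a'' x) := hgA' x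
      rw [h5, h6, sub_self]
    obtain ⟨h, hh⟩ := descend_exists b'' hbsurj (ModuleCat.ofHom f' : B'' ⟶ Q) hkill
    obtain ⟨gC, hgC⟩ := pC.lift Q hQ h
    have hgC' : ∀ c, gC (pC.ι c) = h c := fun c => ConcreteCategory.congr_hom hgC c
    refine ⟨ModuleCat.ofHom (LinearMap.coprod (gA : pA.P →ₗ[R] Q) (gC : pC.P →ₗ[R] Q) : _ →ₗ[R] Q), ?_⟩
    apply ModuleCat.hom_ext
    apply LinearMap.ext
    rintro ⟨⟨p, q⟩, hmem⟩
    show gA p + gC q = f ⟨(p, q), hmem⟩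
    have h3 : pC.ι (b'' ⟨(p, q), hmem⟩) = q := hb'' _
    have h5 : f' ⟨(p, q), hmem⟩ = f ⟨(p, q), hmem⟩ - gA p := hf' _
    calc gA p + gC q = gA p + gC (pC.ι (b'' ⟨(p, q), hmem⟩)) := by rw [h3]
      _ = gA p + h (b'' ⟨(p, q), hmem⟩) := by rw [hgC']
      _ = gA p + f' ⟨(p, q), hmem⟩ := by exact congrArg (fun t => gA p + t) (hh _)
      _ = f ⟨(p, q), hmem⟩ := by rw [h5]; abel
  refine ⟨B'', ⟨⟨{ f := a'', g := b'', inj := hainj, surj := hbsurj, exact := hexact },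
    { P := PB, ι := ιB, π := πB,
      proj := (inferInstance : Module.Projective R (Prod (pA.P : Type u) (pC.P : Type u)))
      inj := Subtype.val_injective
      surj := hπBsurj
      exact := ?_
      lift := hlift }⟩⟩⟩
  intro y
  constructor
  · intro hy
    exact ⟨⟨y, by rw [LinearMap.mem_ker]; exact hy⟩, rfl⟩
  · rintro ⟨z, rfl⟩
    exact LinearMap.mem_ker.mp z.2

/-- Horseshoe step, cosyzygy direction: given `0 → A' → B' → C' → 0`, patches
`0 → A' → PA → A₂ → 0` and `0 → C' → PC → C₂ → 0`, and some patch onto `C'`,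
produce a patch `0 → B' → PA ⊕ PC → B₂ → 0` with `0 → A₂ → B₂ → C₂ → 0` exact. -/
lemma stepNeg {A' B' C' A₂ C₂ X : ModuleCat.{u} R} (s : SES A' B' C')
    (pA : Patch A' A₂) (pC : Patch C' C₂) (oC : Patch X C') :
    ∃ B₂ : ModuleCat.{u} R, Nonempty (SES A₂ B₂ C₂ × Patch B' B₂) := by
  haveI := pA.proj; haveI := pC.proj
  obtain ⟨e, he⟩ := extend_of_patch s oC pA.P (quasiProjective_of_projective pA.proj) pA.ι
  let PB := ModuleCat.of R (Prod (pA.P : Type u) (pC.P : Type u))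
  let jB : B' ⟶ PB :=
    (LinearMap.prod (e : B' →ₗ[R] pA.P) ((pC.ι : C' →ₗ[R] pC.P) ∘ₗ (s.g : B' →ₗ[R] C'))
      : _ →ₗ[R] _)
  have hjB : ∀ y : B', jB y = (e y, pC.ι (s.g y)) := fun _ => rfl
  have hjInj : Function.Injective jB := by
    rw [injective_iff_map_eq_zero]
    intro y hy
    have h1 : e y = 0 := congrArg Prod.fst (hjB y ▸ hy)
    have h2 : pC.ι (s.g y) = 0 := congrArg Prod.snd (hjB y ▸ hy)
    have h3 : s.g y = 0 := pC.inj (by rw [h2, map_zero])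
    obtain ⟨x, hx⟩ := s.mem_range_of_g_zero h3
    have h4 : pA.ι x = 0 := by rw [← he x, hx, h1]
    have h5 : x = 0 := pA.inj (by rw [h4, map_zero])
    rw [← hx, h5, map_zero]
  let Rng := LinearMap.range (jB.hom : (B' : Type u) →ₗ[R] (Prod (pA.P : Type u) (pC.P : Type u)))
  let B₂ := ModuleCat.of R ((Prod (pA.P : Type u) (pC.P : Type u)) ⧸ Rng)
  let πB : PB ⟶ B₂ := ModuleCat.ofHom Rng.mkQ
  have hπBsurj : Function.Surjective πB := Submodule.mkQ_surjective Rng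
  have hπBzero : ∀ w, πB w = 0 ↔ w ∈ Rng := fun w => Submodule.Quotient.mk_eq_zero Rng
  have hexactJ : Function.Exact jB πB := by
    intro w
    rw [hπBzero]
    exact ⟨fun hw => hw, fun hw => hw⟩
  have hπjB : ∀ y, πB (jB y) = 0 := fun y => (hπBzero _).mpr ⟨y, rfl⟩
  -- a₂ : A₂ ⟶ B₂
  obtain ⟨a₂, ha₂⟩ := descend_exists pA.π pA.surj
    (ModuleCat.ofHom ((πB.hom : (Prod (pA.P : Type u) (pC.P : Type u)) →ₗ[R] B₂) ∘ₗ
      LinearMap.inl R (pA.P : Type u) (pC.P : Type u) : _ →ₗ[R] _) : pA.P ⟶ B₂)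
    (by
      intro p hp
      obtain ⟨x, hx⟩ := pA.mem_range_of_pi_zero hp
      show πB (p, 0) = 0
      have h1 : ((p, (0 : pC.P)) : Prod (pA.P : Type u) (pC.P : Type u)) = jB (s.f x) := by
        rw [hjB, s.g_f_zero, map_zero, he, hx]
      rw [h1, hπjB])
  have ha₂' : ∀ p : pA.P, a₂ (pA.π p) = πB (p, 0) := fun p => ha₂ p
  -- b₂ : B₂ ⟶ C₂
  obtain ⟨b₂, hb₂⟩ := descend_exists πB hπBsurj
    (ModuleCat.ofHom ((pC.π.hom : pC.P →ₗ[R] C₂) ∘ₗ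
      LinearMap.snd R (pA.P : Type u) (pC.P : Type u) : _ →ₗ[R] _) : PB ⟶ C₂)
    (by
      intro w hw
      obtain ⟨y, hy⟩ := (hexactJ w).mp hw
      show pC.π w.2 = 0
      rw [← hy, hjB]
      show pC.π (pC.ι (s.g y)) = 0
      rw [pC.pi_iota_zero])
  have hb₂' : ∀ w : Prod (pA.P : Type u) (pC.P : Type u), b₂ (πB w) = pC.π w.2 :=
    fun w => hb₂ w
  have hainj : Function.Injective a₂ := by
    rw [injective_iff_map_eq_zero]
    intro z hz
    obtain ⟨p, rfl⟩ := pA.surj z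
    rw [ha₂'] at hz
    obtain ⟨y, hy⟩ := (hexactJ _).mp hz
    have h1 : e y = p := congrArg Prod.fst (hjB y ▸ hy)
    have h2 : pC.ι (s.g y) = 0 := congrArg Prod.snd (hjB y ▸ hy)
    have h3 : s.g y = 0 := pC.inj (by rw [h2, map_zero])
    obtain ⟨x, hx⟩ := s.mem_range_of_g_zero h3
    have h4 : p = pA.ι x := by rw [← h1, ← hx, he]
    rw [h4, pA.pi_iota_zero]
  have hbsurj : Function.Surjective b₂ := by
    intro c₂
    obtain ⟨q, hq⟩ := pC.surj c₂
    exact ⟨πB (0, q), by rw [hb₂']; exact hq⟩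
  have hexact2 : Function.Exact a₂ b₂ := by
    intro z
    constructor
    · intro hz
      obtain ⟨⟨p, q⟩, rfl⟩ := hπBsurj z
      rw [hb₂'] at hz
      obtain ⟨c, hc⟩ := pC.mem_range_of_pi_zero hz
      obtain ⟨y, hy⟩ := s.surj c
      have hq : q = pC.ι (s.g y) := by rw [hy, hc]
      refine ⟨pA.π (p - e y), ?_⟩
      rw [ha₂']
      have h1 : ((p - e y, (0 : pC.P)) : Prod (pA.P : Type u) (pC.P : Type u))
          = ((p, q) : Prod (pA.P : Type u) (pC.P : Type u)) - (e y, pC.ι (s.g y)) := by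
        rw [Prod.mk_sub_mk, ← hq, sub_self]
      rw [h1, map_sub]
      have h4 : πB ((e y, pC.ι (s.g y)) : Prod (pA.P : Type u) (pC.P : Type u)) = 0 :=
        hπjB y
      rw [h4, sub_zero]
    · rintro ⟨x, hx⟩
      rw [← hx]
      obtain ⟨p, rfl⟩ := pA.surj x
      rw [ha₂', hb₂']
      show pC.π 0 = 0
      rw [map_zero]
  -- the lifting property of the new patch
  have hlift : ∀ Q : ModuleCat.{u} R, QuasiProjective Q →
      ∀ f : B' ⟶ Q, ∃ g : PB ⟶ Q, jB ≫ g = f := by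
    intro Q hQ f
    obtain ⟨gA, hgA⟩ := pA.lift Q hQ (((f : B' →ₗ[R] Q) ∘ₗ (s.f : A' →ₗ[R] B')) : A' ⟶ Q)
    have hgA' : ∀ x, gA (pA.ι x) = f (s.f x) := fun x => ConcreteCategory.congr_hom hgA x
    let f' : (B' : Type u) →ₗ[R] (Q : Type u) :=
      (f : B' →ₗ[R] Q) - (gA : pA.P →ₗ[R] Q) ∘ₗ (e : B' →ₗ[R] pA.P)
    have hf' : ∀ y, f' y = f y - gA (e y) := fun _ => rfl
    have hkill : ∀ y, s.g y = 0 → f' y = 0 := by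
      intro y hy
      obtain ⟨x, hx⟩ := s.mem_range_of_g_zero hy
      rw [hf', ← hx, he, hgA', sub_self]
    obtain ⟨h, hh⟩ := descend_exists s.g s.surj (f' : B' ⟶ Q) hkill
    obtain ⟨gC, hgC⟩ := pC.lift Q hQ h
    have hgC' : ∀ c, gC (pC.ι c) = h c := fun c => ConcreteCategory.congr_hom hgC c
    refine ⟨ModuleCat.ofHom (LinearMap.coprod (gA : pA.P →ₗ[R] Q) (gC : pC.P →ₗ[R] Q) : _ →ₗ[R] Q), ?_⟩
    apply ModuleCat.hom_ext
    apply LinearMap.ext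
    intro y
    show gA (e y) + gC (pC.ι (s.g y)) = f y
    rw [hgC']
    have h2 : h (s.g y) = f' y := hh y
    rw [h2, hf']
    abel
  exact ⟨B₂, ⟨⟨{ f := a₂, g := b₂, inj := hainj, surj := hbsurj, exact := hexact2 },
    { P := PB, ι := jB, π := πB,
      proj := (inferInstance : Module.Projective R (Prod (pA.P : Type u) (pC.P : Type u)))
      inj := hjInj
      surj := hπBsurj
      exact := hexactJ
      lift := hlift }⟩⟩⟩

/-- Iterate `stepPos` to resolve `B0` to the right (projective resolution side). -/
lemma posTowerBuild {B0 : ModuleCat.{u} R} (KA KC : ℕ → ModuleCat.{u} R)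
    (pA : ∀ n, Patch (KA (n+1)) (KA n)) (pC : ∀ n, Patch (KC (n+1)) (KC n))
    (s0 : SES (KA 0) B0 (KC 0)) :
    ∃ KB : ℕ → ModuleCat.{u} R, KB 0 = B0 ∧ Nonempty (∀ n, Patch (KB (n+1)) (KB n)) := by
  let T : ∀ n : ℕ, Σ Bn : ModuleCat.{u} R, SES (KA n) Bn (KC n) := fun n =>
    Nat.rec (motive := fun n => Σ Bn : ModuleCat.{u} R, SES (KA n) Bn (KC n))
      ⟨B0, s0⟩
      (fun n prev => ⟨_, ((stepPos prev.2 (pA n) (pC n)).choose_spec.some).1⟩) n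
  refine ⟨fun n => (T n).1, rfl, ⟨fun n => ?_⟩⟩
  exact ((stepPos (T n).2 (pA n) (pC n)).choose_spec.some).2

/-- Iterate `stepNeg` to coresolve `B0` to the left. -/
lemma negTowerBuild {B0 : ModuleCat.{u} R} (LA LC : ℕ → ModuleCat.{u} R)
    (qA : ∀ m, Patch (LA m) (LA (m+1))) (qC : ∀ m, Patch (LC m) (LC (m+1)))
    (X : ℕ → ModuleCat.{u} R) (oC : ∀ m, Patch (X m) (LC m))
    (s0 : SES (LA 0) B0 (LC 0)) :
    ∃ LB : ℕ → ModuleCat.{u} R, LB 0 = B0 ∧ Nonempty (∀ m, Patch (LB m) (LB (m+1))) := by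
  let T : ∀ m : ℕ, Σ Bm : ModuleCat.{u} R, SES (LA m) Bm (LC m) := fun m =>
    Nat.rec (motive := fun m => Σ Bm : ModuleCat.{u} R, SES (LA m) Bm (LC m))
      ⟨B0, s0⟩
      (fun m prev => ⟨_, ((stepNeg prev.2 (qA m) (qC m) (oC m)).choose_spec.some).1⟩) m
  refine ⟨fun m => (T m).1, rfl, ⟨fun m => ?_⟩⟩
  exact ((stepNeg (T m).2 (qA m) (qC m) (oC m)).choose_spec.some).2

/-- Glue a syzygy tower and a cosyzygy tower into a complete resolution. -/
lemma qgp_of_towers (M : ModuleCat.{u} R) (KB : ℕ → ModuleCat.{u} R)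
    (p : ∀ n, Patch (KB (n+1)) (KB n)) (LB : ℕ → ModuleCat.{u} R)
    (q : ∀ m, Patch (LB m) (LB (m+1))) (h0 : LB 0 = KB 0) (e : Nonempty (M ≅ KB 0)) :
    QuasiGorensteinProjective M := by
  let K : ℤ → ModuleCat.{u} R := fun n => match n with
    | .ofNat m => KB m
    | .negSucc m => LB (m+1)
  have pt : ∀ n : ℤ, Patch (K (n+1)) (K n) := fun n => match n with
    | .ofNat m => p m
    | .negSucc 0 => Patch.cast h0 rfl (q 0)
    | .negSucc (m+1) => q (m+1)
  exact ⟨K, fun n => (pt n).P, fun n => (pt n).ι, fun n => (pt n).π,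
    fun n => (pt n).proj, fun n => (pt n).inj, fun n => (pt n).surj,
    fun n => (pt n).exact, fun n => (pt n).lift, e⟩

/-- Unpack the definition of quasi-Gorenstein projectivity into patches. -/
lemma qgp_patches {M : ModuleCat.{u} R} (h : QuasiGorensteinProjective M) :
    ∃ K : ℤ → ModuleCat.{u} R,
      Nonempty ((∀ n : ℤ, Patch (K (n+1)) (K n)) × (M ≅ K 0)) := by
  obtain ⟨K, P, ι, π, hproj, hinj, hsurj, hexact, hlift, ⟨e⟩⟩ := h
  exact ⟨K, ⟨⟨fun n => ⟨P n, ι n, π n, hproj n, hinj n, hsurj n, hexact n, hlift n⟩, e⟩⟩⟩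

/-- The trivial patch `0 → P → P ⊕ P → P → 0` of a projective module. -/
noncomputable def constPatch (P : ModuleCat.{u} R) (h : Module.Projective R P) :
    Patch P P := by
  haveI := h
  refine { P := ModuleCat.of R (Prod (P : Type u) (P : Type u))
           ι := ModuleCat.ofHom (LinearMap.prod LinearMap.id 0 : (P : Type u) →ₗ[R] _)
           π := ModuleCat.ofHom (LinearMap.snd R (P : Type u) (P : Type u) : _ →ₗ[R] (P : Type u))
           proj := (inferInstance : Module.Projective R (Prod (P : Type u) (P : Type u)))
           inj := ?_
           surj := ?_
           exact := ?_
           lift := ?_ }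
  · intro a b hab
    exact congrArg Prod.fst hab
  · intro b
    exact ⟨(0, b), rfl⟩
  · rintro ⟨a, b⟩
    constructor
    · intro hb
      refine ⟨a, ?_⟩
      show ((a, (0 : (P : Type u))) : Prod (P : Type u) (P : Type u)) = (a, b)
      have hb' : (0 : (P : Type u)) = b := by
        have : ((a, b) : Prod (P : Type u) (P : Type u)).2 = 0 := hb
        exact this.symm
      rw [hb']
    · rintro ⟨x, hx⟩
      rw [← hx]
      rfl
  · intro Q hQ f
    refine ⟨ModuleCat.ofHom ((f.hom : (P : Type u) →ₗ[R] (Q : Type u)) ∘ₗ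
      LinearMap.fst R (P : Type u) (P : Type u) : _ →ₗ[R] _), ?_⟩
    apply ModuleCat.hom_ext
    apply LinearMap.ext
    intro x
    rfl

/-- Projective modules are quasi-Gorenstein projective. -/
lemma qgp_of_projective (P : ModuleCat.{u} R) (h : Module.Projective R P) :
    QuasiGorensteinProjective P := by
  let pt := constPatch P h
  exact ⟨fun _ => P, fun _ => pt.P, fun _ => pt.ι, fun _ => pt.π,
    fun _ => pt.proj, fun _ => pt.inj, fun _ => pt.surj,
    fun _ => pt.exact, fun _ => pt.lift, ⟨Iso.refl P⟩⟩

/-- Extension closure: in `0 → A → B → C → 0` with `A`, `C` quasi-Gorenstein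
projective, so is `B`. -/
lemma qgp_ext {A B C : ModuleCat.{u} R} (s : SES A B C)
    (hA : QuasiGorensteinProjective A) (hC : QuasiGorensteinProjective C) :
    QuasiGorensteinProjective B := by
  obtain ⟨KA, ⟨ptA, eA⟩⟩ := qgp_patches hA
  obtain ⟨KC, ⟨ptC, eC⟩⟩ := qgp_patches hC
  let s' : SES (KA 0) B (KC 0) := s.congr eA.symm eC
  obtain ⟨KB, hKB0, ⟨p⟩⟩ := posTowerBuild (fun n => KA (Int.ofNat n))
    (fun n => KC (Int.ofNat n)) (fun n => ptA (Int.ofNat n)) (fun n => ptC (Int.ofNat n)) s'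
  let LA : ℕ → ModuleCat.{u} R := fun m => match m with
    | 0 => KA (Int.ofNat 0)
    | (m+1) => KA (Int.negSucc m)
  let LC : ℕ → ModuleCat.{u} R := fun m => match m with
    | 0 => KC (Int.ofNat 0)
    | (m+1) => KC (Int.negSucc m)
  have qA : ∀ m, Patch (LA m) (LA (m+1)) := fun m => match m with
    | 0 => ptA (Int.negSucc 0)
    | (m+1) => ptA (Int.negSucc (m+1))
  have qC : ∀ m, Patch (LC m) (LC (m+1)) := fun m => match m with
    | 0 => ptC (Int.negSucc 0)
    | (m+1) => ptC (Int.negSucc (m+1))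
  let X : ℕ → ModuleCat.{u} R := fun m => match m with
    | 0 => KC (Int.ofNat 1)
    | (m+1) => LC m
  have oC : ∀ m, Patch (X m) (LC m) := fun m => match m with
    | 0 => ptC (Int.ofNat 0)
    | (m+1) => qC m
  obtain ⟨LB, hLB0, ⟨q⟩⟩ := negTowerBuild LA LC qA qC X oC s'
  exact qgp_of_towers B KB p LB q (hLB0.trans hKB0.symm) ⟨eqToIso hKB0.symm⟩

/-- The first cosyzygy `K 1` of a complete resolution is quasi-Gorenstein projective. -/
lemma qgp_shift1 {K : ℤ → ModuleCat.{u} R} (pt : ∀ n : ℤ, Patch (K (n+1)) (K n)) :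
    QuasiGorensteinProjective (K 1) :=
  ⟨fun n => K (n+1), fun n => (pt (n+1)).P, fun n => (pt (n+1)).ι, fun n => (pt (n+1)).π,
    fun n => (pt (n+1)).proj, fun n => (pt (n+1)).inj, fun n => (pt (n+1)).surj,
    fun n => (pt (n+1)).exact, fun n => (pt (n+1)).lift, ⟨Iso.refl _⟩⟩

/-- Product of two patches. -/
noncomputable def Patch.prod {K' K L' L : ModuleCat.{u} R} (p : Patch K' K)
    (q : Patch L' L) :
    Patch (ModuleCat.of R (Prod (K' : Type u) (L' : Type u)))
      (ModuleCat.of R (Prod (K : Type u) (L : Type u))) := by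
  haveI := p.proj; haveI := q.proj
  refine { P := ModuleCat.of R (Prod (p.P : Type u) (q.P : Type u))
           ι := ModuleCat.ofHom (LinearMap.prodMap (p.ι : K' →ₗ[R] p.P) (q.ι : L' →ₗ[R] q.P) : _ →ₗ[R] _)
           π := ModuleCat.ofHom (LinearMap.prodMap (p.π : p.P →ₗ[R] K) (q.π : q.P →ₗ[R] L) : _ →ₗ[R] _)
           proj := (inferInstance : Module.Projective R (Prod (p.P : Type u) (q.P : Type u)))
           inj := ?_
           surj := ?_
           exact := ?_
           lift := ?_ }
  · rw [injective_iff_map_eq_zero]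
    rintro ⟨k, l⟩ h
    have h1 : p.ι k = 0 := congrArg Prod.fst h
    have h2 : q.ι l = 0 := congrArg Prod.snd h
    have h3 : k = 0 := p.inj (by rw [h1, map_zero])
    have h4 : l = 0 := q.inj (by rw [h2, map_zero])
    rw [h3, h4]
    exact rfl
  · rintro ⟨k, l⟩
    obtain ⟨w, hw⟩ := p.surj k
    obtain ⟨v, hv⟩ := q.surj l
    exact ⟨(w, v), by show (p.π w, q.π v) = (k, l); rw [hw, hv]⟩
  · rintro ⟨w, v⟩
    constructor
    · intro h
      have h1 : p.π w = 0 := congrArg Prod.fst h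
      have h2 : q.π v = 0 := congrArg Prod.snd h
      obtain ⟨k, hk⟩ := p.mem_range_of_pi_zero h1
      obtain ⟨l, hl⟩ := q.mem_range_of_pi_zero h2
      exact ⟨(k, l), by show (p.ι k, q.ι l) = (w, v); rw [hk, hl]⟩
    · rintro ⟨⟨k, l⟩, hkl⟩
      rw [← hkl]
      show (p.π (p.ι k), q.π (q.ι l)) = 0
      rw [p.pi_iota_zero, q.pi_iota_zero]
      rfl
  · intro Q hQ u
    obtain ⟨v1, hv1⟩ := p.lift Q hQ
      (ModuleCat.ofHom ((u.hom : _ →ₗ[R] Q) ∘ₗ LinearMap.inl R (K' : Type u) (L' : Type u) : _ →ₗ[R] _) : K' ⟶ Q)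
    obtain ⟨v2, hv2⟩ := q.lift Q hQ
      (ModuleCat.ofHom ((u.hom : _ →ₗ[R] Q) ∘ₗ LinearMap.inr R (K' : Type u) (L' : Type u) : _ →ₗ[R] _) : L' ⟶ Q)
    have hv1' : ∀ k, v1 (p.ι k) = u (k, 0) := fun k => ConcreteCategory.congr_hom hv1 k
    have hv2' : ∀ l, v2 (q.ι l) = u (0, l) := fun l => ConcreteCategory.congr_hom hv2 l
    refine ⟨ModuleCat.ofHom (LinearMap.coprod (v1 : p.P →ₗ[R] Q) (v2 : q.P →ₗ[R] Q) : _ →ₗ[R] Q), ?_⟩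
    apply ModuleCat.hom_ext
    apply LinearMap.ext
    rintro ⟨k, l⟩
    show v1 (p.ι k) + v2 (q.ι l) = u (k, l)
    rw [hv1', hv2', ← map_add]
    congr 1
    rw [Prod.mk_add_mk, add_zero, zero_add]

/-- If `0 → A → B → P' → 0` is exact with `P'` projective and `B`
quasi-Gorenstein projective, then `A` is quasi-Gorenstein projective. -/
lemma qgp_kernel_proj {A B P' : ModuleCat.{u} R} (s0 : SES A B P')
    (hP' : Module.Projective R P') (hB : QuasiGorensteinProjective B) :
    QuasiGorensteinProjective A := by
  haveI := hP'
  obtain ⟨K, ⟨pt, eB⟩⟩ := qgp_patches hB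
  let s : SES A (K 0) P' := s0.congrMid eB
  -- split the sequence
  obtain ⟨σ, hσ⟩ := Module.projective_lifting_property (s.g : K 0 →ₗ[R] P')
    (LinearMap.id : (P' : Type u) →ₗ[R] (P' : Type u)) s.surj
  have hσ' : ∀ p, s.g (σ p) = p := fun p => LinearMap.congr_fun hσ p
  have hmemρ : ∀ y : (K 0 : Type u), y - σ (s.g y) ∈
      LinearMap.range (s.f : A →ₗ[R] K 0) := by
    intro y
    have h1 : s.g (y - σ (s.g y)) = 0 := by rw [map_sub, hσ', sub_self]
    obtain ⟨x, hx⟩ := s.mem_range_of_g_zero h1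
    exact ⟨x, hx⟩
  let eqA := LinearEquiv.ofInjective (s.f : A →ₗ[R] K 0) s.inj
  let ρ : K 0 ⟶ A := ((eqA.symm : _ →ₗ[R] A) ∘ₗ
    LinearMap.codRestrict (LinearMap.range (s.f : A →ₗ[R] K 0))
      (LinearMap.id - (σ : (P' : Type u) →ₗ[R] K 0) ∘ₗ (s.g : K 0 →ₗ[R] P')) hmemρ)
  have hρ : ∀ y, s.f (ρ y) = y - σ (s.g y) := by
    intro y
    have h0 : s.f (ρ y) = (eqA (ρ y) : K 0) := (LinearEquiv.ofInjective_apply _ _).symm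
    have h1 : (eqA (ρ y) : K 0) = y - σ (s.g y) := by
      show ((eqA (eqA.symm _)) : K 0) = _
      rw [LinearEquiv.apply_symm_apply]
      exact LinearMap.codRestrict_apply _ _ _
    rw [h0, h1]
  have hρf : ∀ x, ρ (s.f x) = x := fun x =>
    s.inj (by rw [hρ, s.g_f_zero, map_zero, sub_zero])
  have hρσ : ∀ p, ρ (σ p) = 0 := fun p =>
    s.inj (by rw [hρ, hσ', sub_self, map_zero])
  -- positive tower for A
  let KB : ℕ → ModuleCat.{u} R := fun n => match n with
    | 0 => A
    | (n+1) => ModuleCat.of R (Prod (K (Int.ofNat (n+1)) : Type u) (P' : Type u))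
  haveI := (pt 0).proj
  obtain ⟨τ, hτ⟩ := Module.projective_lifting_property ((pt 0).π : (pt 0).P →ₗ[R] K 0)
    (σ : (P' : Type u) →ₗ[R] K 0) (pt 0).surj
  have hτ' : ∀ p, (pt 0).π (τ p) = σ p := fun p => LinearMap.congr_fun hτ p
  have pPos0 : Patch (KB 1) (KB 0) := by
    refine { P := (pt 0).P
             ι := ModuleCat.ofHom (LinearMap.coprod ((pt 0).ι : (K ((0:ℤ)+1) : Type u) →ₗ[R] (pt 0).P) τ
               : _ →ₗ[R] _)
             π := (pt 0).π ≫ ρ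
             proj := (pt 0).proj
             inj := ?_
             surj := ?_
             exact := ?_
             lift := ?_ }
    · rw [injective_iff_map_eq_zero]
      rintro ⟨k, p⟩ hz
      have hz' : (pt 0).ι k + τ p = 0 := hz
      have h1 : (pt 0).π ((pt 0).ι k + τ p) = 0 := by rw [hz', map_zero]
      rw [map_add, (pt 0).pi_iota_zero, zero_add, hτ'] at h1
      have h2 : p = 0 := by rw [← hσ' p, h1, map_zero]
      rw [h2, map_zero, add_zero] at hz'
      have h3 : k = 0 := (pt 0).inj (by rw [hz', map_zero])
      rw [h2, h3]
      exact rfl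
    · intro x
      obtain ⟨q, hq⟩ := (pt 0).surj (s.f x)
      exact ⟨q, by show ρ ((pt 0).π q) = x; rw [hq, hρf]⟩
    · intro q
      constructor
      · intro hq
        have hq' : ρ ((pt 0).π q) = 0 := hq
        have h1 : (pt 0).π q = σ (s.g ((pt 0).π q)) := by
          have h2 := hρ ((pt 0).π q)
          rw [hq', map_zero] at h2
          exact sub_eq_zero.mp h2.symm
        have h2 : (pt 0).π (q - τ (s.g ((pt 0).π q))) = 0 := by
          rw [map_sub, hτ', ← h1, sub_self]
        obtain ⟨k, hk⟩ := (pt 0).mem_range_of_pi_zero h2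
        refine ⟨(k, s.g ((pt 0).π q)), ?_⟩
        show (pt 0).ι k + τ (s.g ((pt 0).π q)) = q
        rw [hk]
        abel
      · rintro ⟨⟨k, p⟩, hkp⟩
        rw [← hkp]
        show ρ ((pt 0).π ((pt 0).ι k + τ p)) = 0
        rw [map_add, (pt 0).pi_iota_zero, zero_add, hτ', hρσ]
    · intro Q hQ u
      obtain ⟨v, hv⟩ := (pt 0).lift Q hQ
        (ModuleCat.ofHom ((u.hom : _ →ₗ[R] Q) ∘ₗ
          LinearMap.inl R (K ((0:ℤ)+1) : Type u) (P' : Type u) : _ →ₗ[R] _)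
            : K ((0:ℤ)+1) ⟶ Q)
      have hv' : ∀ k, v ((pt 0).ι k) = u (k, 0) := fun k => ConcreteCategory.congr_hom hv k
      let w : ((pt 0).P : Type u) →ₗ[R] (Q : Type u) := (v : (pt 0).P →ₗ[R] Q) +
        (((u.hom : _ →ₗ[R] Q) ∘ₗ LinearMap.inr R (K ((0:ℤ)+1) : Type u) (P' : Type u)
            : _ →ₗ[R] _)
          - (v : (pt 0).P →ₗ[R] Q) ∘ₗ (τ : (P' : Type u) →ₗ[R] (pt 0).P)) ∘ₗ
        ((s.g : K 0 →ₗ[R] P') ∘ₗ ((pt 0).π : (pt 0).P →ₗ[R] K 0))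
      have hw : ∀ z, w z = v z + (u (0, s.g ((pt 0).π z)) - v (τ (s.g ((pt 0).π z)))) :=
        fun _ => rfl
      refine ⟨(w : (pt 0).P ⟶ Q), ?_⟩
      apply ModuleCat.hom_ext
      apply LinearMap.ext
      rintro ⟨k, p⟩
      have hgp : s.g ((pt 0).π ((pt 0).ι k + τ p)) = p := by
        rw [map_add, (pt 0).pi_iota_zero, zero_add, hτ', hσ']
      show w ((pt 0).ι k + τ p) = u (k, p)
      rw [hw, hgp, map_add (ConcreteCategory.hom v), hv']
      have h9 : u (k, 0) + u (0, p) = u (k, p) := by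
        rw [← map_add]
        congr 1
        rw [Prod.mk_add_mk, add_zero, zero_add]
      rw [← h9]
      abel
  have pPos : ∀ n, Patch (KB (n+1)) (KB n) := fun n => match n with
    | 0 => pPos0
    | (n+1) => Patch.prod (pt (Int.ofNat (n+1))) (constPatch P' hP')
  -- negative tower for A
  let pm1 := pt (Int.negSucc 0)
  let j0 : A ⟶ pm1.P := s.f ≫ pm1.ι
  let Rng0 := LinearMap.range (j0 : (A : Type u) →ₗ[R] (pm1.P : Type u))
  let X0 := ModuleCat.of R ((pm1.P : Type u) ⧸ Rng0)
  let π0X : pm1.P ⟶ X0 := ModuleCat.ofHom Rng0.mkQ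
  have hπ0Xsurj : Function.Surjective π0X := Submodule.mkQ_surjective Rng0
  have hπ0Xzero : ∀ w, π0X w = 0 ↔ w ∈ Rng0 := fun w => Submodule.Quotient.mk_eq_zero Rng0
  have hexactJ0 : Function.Exact j0 π0X := by
    intro w
    rw [hπ0Xzero]
    exact ⟨fun hw => hw, fun hw => hw⟩
  have p0 : Patch A X0 := by
    refine { P := pm1.P
             ι := j0
             π := π0X
             proj := pm1.proj
             inj := pm1.inj.comp s.inj
             surj := hπ0Xsurj
             exact := hexactJ0
             lift := ?_ }
    intro Q hQ u
    obtain ⟨v, hv⟩ := pm1.lift Q hQ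
      (ModuleCat.ofHom ((u : A →ₗ[R] Q) ∘ₗ (ρ : (K 0 : Type u) →ₗ[R] A) : _ →ₗ[R] _) : K ((-1 : ℤ)+1) ⟶ Q)
    have hv' : ∀ y, v (pm1.ι y) = u (ρ y) := fun y => ConcreteCategory.congr_hom hv y
    refine ⟨v, ?_⟩
    apply ModuleCat.hom_ext
    apply LinearMap.ext
    intro x
    show v (pm1.ι (s.f x)) = u x
    rw [hv', hρf]
  -- SES 0 → P' → X0 → K (-1) → 0
  obtain ⟨g2, hg2⟩ := descend_exists π0X hπ0Xsurj pm1.π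
    (by
      intro w hw
      obtain ⟨x, hx⟩ := (hexactJ0 w).mp hw
      rw [← hx]
      show pm1.π (pm1.ι (s.f x)) = 0
      rw [pm1.pi_iota_zero])
  have s2 : SES P' X0 (K (Int.negSucc 0)) := by
    refine { f := ModuleCat.ofHom ((π0X.hom : (pm1.P : Type u) →ₗ[R] X0) ∘ₗ (pm1.ι.hom : (K 0 : Type u) →ₗ[R] pm1.P)
               ∘ₗ (σ : (P' : Type u) →ₗ[R] K 0) : _ →ₗ[R] _)
             g := g2
             inj := ?_
             surj := ?_
             exact := ?_ }
    · rw [injective_iff_map_eq_zero]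
      intro p hp
      have hp' : π0X (pm1.ι (σ p)) = 0 := hp
      obtain ⟨x, hx⟩ := (hexactJ0 _).mp hp'
      have h1 : s.f x = σ p := pm1.inj hx
      have h2 : s.g (s.f x) = s.g (σ p) := by rw [h1]
      rw [s.g_f_zero, hσ'] at h2
      exact h2.symm
    · intro k
      obtain ⟨q, hq⟩ := pm1.surj k
      exact ⟨π0X q, by rw [hg2]; exact hq⟩
    · intro z
      obtain ⟨q, rfl⟩ := hπ0Xsurj z
      constructor
      · intro hz
        rw [hg2] at hz
        obtain ⟨y, hy0⟩ := pm1.mem_range_of_pi_zero hz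
        refine ⟨s.g y, ?_⟩
        rw [← hy0]
        show π0X (pm1.ι (σ (s.g y))) = π0X (pm1.ι y)
        have hq : pm1.ι (σ (s.g y)) - pm1.ι y ∈ Rng0 := by
          refine ⟨-(ρ y), ?_⟩
          show pm1.ι (s.f (-(ρ y))) = _
          rw [map_neg (s.f : A →ₗ[R] K 0), hρ, map_neg, map_sub, neg_sub]
        exact (Submodule.Quotient.eq Rng0).mpr hq
      · rintro ⟨p, hp⟩
        rw [← hp]
        show g2 (π0X (pm1.ι (σ p))) = 0
        rw [hg2, pm1.pi_iota_zero]
  -- iterate the cosyzygy construction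
  let LA' : ℕ → ModuleCat.{u} R := fun _ => P'
  have qA' : ∀ m, Patch (LA' m) (LA' (m+1)) := fun _ => constPatch P' hP'
  let LC' : ℕ → ModuleCat.{u} R := fun m => match m with
    | 0 => K (Int.negSucc 0)
    | (m+1) => K (Int.negSucc (m+1))
  have qC' : ∀ m, Patch (LC' m) (LC' (m+1)) := fun m => match m with
    | 0 => pt (Int.negSucc 1)
    | (m+1) => pt (Int.negSucc (m+2))
  let X' : ℕ → ModuleCat.{u} R := fun m => match m with
    | 0 => K (Int.ofNat 0)
    | (m+1) => K (Int.negSucc m)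
  have oC' : ∀ m, Patch (X' m) (LC' m) := fun m => match m with
    | 0 => pt (Int.negSucc 0)
    | (m+1) => pt (Int.negSucc (m+1))
  obtain ⟨LB, hLB0, ⟨qB⟩⟩ := negTowerBuild LA' LC' qA' qC' X' oC' s2
  let LB' : ℕ → ModuleCat.{u} R := fun m => match m with
    | 0 => A
    | (m+1) => LB m
  have qFull : ∀ m, Patch (LB' m) (LB' (m+1)) := fun m => match m with
    | 0 => Patch.cast rfl hLB0.symm p0
    | (m+1) => qB m
  exact qgp_of_towers A KB pPos LB' qFull rfl ⟨Iso.refl A⟩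

/-- If `0 → A → B → C → 0` is exact with `B`, `C` quasi-Gorenstein projective,
then `A` is quasi-Gorenstein projective. -/
lemma qgp_sub {A B C : ModuleCat.{u} R} (s : SES A B C)
    (hB : QuasiGorensteinProjective B) (hC : QuasiGorensteinProjective C) :
    QuasiGorensteinProjective A := by
  obtain ⟨KC, ⟨ptC, eC⟩⟩ := qgp_patches hC
  let s' : SES A B (KC 0) := s.congr (Iso.refl A) eC
  let pc0 := ptC 0
  let d : (ModuleCat.of R (Prod (B : Type u) (pc0.P : Type u))) ⟶ KC 0 :=
    (LinearMap.coprod (s'.g : B →ₗ[R] KC 0) (-(pc0.π : pc0.P →ₗ[R] KC 0)) : _ →ₗ[R] _)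
  have hd : ∀ (y : B) (p : pc0.P), d (y, p) = s'.g y - pc0.π p := by
    intro y p
    show s'.g y + -(pc0.π p) = s'.g y - pc0.π p
    rw [sub_eq_add_neg]
  let Kd := LinearMap.ker (d.hom : _ →ₗ[R] (KC 0 : Type u))
  let Bt := ModuleCat.of R Kd
  have hKd : ∀ z : Prod (B : Type u) (pc0.P : Type u),
      z ∈ Kd ↔ s'.g z.1 = pc0.π z.2 := by
    intro z
    have h0 : d z = s'.g z.1 - pc0.π z.2 := hd z.1 z.2
    constructor
    · intro h
      have h1 : d z = 0 := h
      rw [h0] at h1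
      exact sub_eq_zero.mp h1
    · intro h
      show d z = 0
      rw [h0, h, sub_self]
  have hmem1 : ∀ k : (KC ((0:ℤ)+1) : Type u),
      ((0, pc0.ι k) : Prod (B : Type u) (pc0.P : Type u)) ∈ Kd := by
    intro k
    rw [hKd]
    show s'.g 0 = pc0.π (pc0.ι k)
    rw [map_zero, pc0.pi_iota_zero]
  have s1 : SES (KC ((0:ℤ)+1)) Bt B := by
    refine { f := ModuleCat.ofHom <| LinearMap.codRestrict Kd
               (LinearMap.prod (0 : (KC ((0:ℤ)+1) : Type u) →ₗ[R] (B : Type u))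
                 (pc0.ι.hom : _ →ₗ[R] pc0.P)) hmem1
             g := ModuleCat.ofHom ((LinearMap.fst R (B : Type u) (pc0.P : Type u)) ∘ₗ Kd.subtype : _ →ₗ[R] _)
             inj := ?_
             surj := ?_
             exact := ?_ }
    · rw [injective_iff_map_eq_zero]
      intro k hk
      have h2 : (((0 : B), pc0.ι k) : Prod (B : Type u) (pc0.P : Type u)) = 0 :=
        congrArg Subtype.val hk
      have h1 : pc0.ι k = 0 := congrArg Prod.snd h2
      exact pc0.inj (by rw [h1, map_zero])
    · intro y
      obtain ⟨p, hp⟩ := pc0.surj (s'.g y)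
      have hm : ((y, p) : Prod (B : Type u) (pc0.P : Type u)) ∈ Kd :=
        (hKd _).mpr hp.symm
      exact ⟨⟨(y, p), hm⟩, rfl⟩
    · rintro ⟨⟨y, p⟩, hm⟩
      constructor
      · intro h0
        have h0' : y = 0 := h0
        have h1 : pc0.π p = 0 := by
          have h3 := (hKd _).mp hm
          rw [h0', map_zero] at h3
          exact h3.symm
        obtain ⟨k, hk⟩ := pc0.mem_range_of_pi_zero h1
        refine ⟨k, Subtype.ext ?_⟩
        show (((0 : B), pc0.ι k) : Prod (B : Type u) (pc0.P : Type u)) = (y, p)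
        rw [hk, h0']
      · rintro ⟨k, hk⟩
        rw [← hk]
        exact rfl
  have hmem2 : ∀ x : (A : Type u),
      ((s'.f x, 0) : Prod (B : Type u) (pc0.P : Type u)) ∈ Kd := by
    intro x
    rw [hKd]
    show s'.g (s'.f x) = pc0.π 0
    rw [s'.g_f_zero, map_zero]
  have s2 : SES A Bt pc0.P := by
    refine { f := ModuleCat.ofHom <| LinearMap.codRestrict Kd
               (LinearMap.prod (s'.f : A →ₗ[R] B)
                 (0 : (A : Type u) →ₗ[R] (pc0.P : Type u))) hmem2
             g := ModuleCat.ofHom ((LinearMap.snd R (B : Type u) (pc0.P : Type u)) ∘ₗ Kd.subtype : _ →ₗ[R] _)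
             inj := ?_
             surj := ?_
             exact := ?_ }
    · rw [injective_iff_map_eq_zero]
      intro x hx
      have h2 : ((s'.f x, (0 : pc0.P)) : Prod (B : Type u) (pc0.P : Type u)) = 0 :=
        congrArg Subtype.val hx
      have h1 : s'.f x = 0 := congrArg Prod.fst h2
      exact s'.inj (by rw [h1, map_zero])
    · intro p
      obtain ⟨y, hy⟩ := s'.surj (pc0.π p)
      have hm : ((y, p) : Prod (B : Type u) (pc0.P : Type u)) ∈ Kd := (hKd _).mpr hy
      exact ⟨⟨(y, p), hm⟩, rfl⟩
    · rintro ⟨⟨y, p⟩, hm⟩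
      constructor
      · intro h0
        have h0' : p = 0 := h0
        have h1 : s'.g y = 0 := by
          have h3 := (hKd _).mp hm
          rw [h0', map_zero] at h3
          exact h3
        obtain ⟨x, hx⟩ := s'.mem_range_of_g_zero h1
        refine ⟨x, Subtype.ext ?_⟩
        show ((s'.f x, (0 : pc0.P)) : Prod (B : Type u) (pc0.P : Type u)) = (y, p)
        rw [hx, h0']
      · rintro ⟨x, hx⟩
        rw [← hx]
        exact rfl
  have hKC1 : QuasiGorensteinProjective (KC ((0:ℤ)+1)) := qgp_shift1 ptC
  have hBt : QuasiGorensteinProjective Bt := qgp_ext s1 hKC1 hB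
  exact qgp_kernel_proj s2 pc0.proj hBt

end QGPaux

/-- The class of quasi-Gorenstein projective modules is projectively resolving:
it contains all projectives, and for any short exact sequence `0 → A → B → C → 0`
with `C` quasi-Gorenstein projective, `A` is quasi-Gorenstein projective iff `B` is. -/
theorem quasiGorensteinProjective_projectively_resolving :
    (∀ P : ModuleCat.{u} R, Module.Projective R P → QuasiGorensteinProjective P) ∧
    (∀ (A B C : ModuleCat.{u} R) (f : A ⟶ B) (g : B ⟶ C),
      Function.Injective f → Function.Surjective g → Function.Exact f g →
      QuasiGorensteinProjective C →
      (QuasiGorensteinProjective A ↔ QuasiGorensteinProjective B)) := by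
  constructor
  · exact fun P h => QGPaux.qgp_of_projective P h
  · intro A B C f g hf hg hfg hC
    constructor
    · intro hA
      exact QGPaux.qgp_ext { f := f, g := g, inj := hf, surj := hg, exact := hfg } hA hC
    · intro hB
      exact QGPaux.qgp_sub { f := f, g := g, inj := hf, surj := hg, exact := hfg } hB hC
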